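/- Let T ∈ ℝ², r > 0, and let A, C ∈ ℝ² be points with ‖A − T‖ > r and ‖C − T‖ > r, such that the closed segment from A to C does not intersect the closed disc B(T, r). Then the function S ↦ ‖A − S‖ + ‖C − S‖ attains a minimum over the closed disc B(T, r); every minimizer S* satisfies ‖S* − T‖ = r (the constraint is active); and at every minimizer the equal-angle (reflection) condition holds: ⟨A − S*, T − S*⟩ / ‖A − S*‖ = ⟨C − S*, T − S*⟩ / ‖C − S*‖, i.e. the line through S* and T bisects the angle between the segments from S* to A and from S* to C. -/

import Mathlib

open Metric Set
open scoped RealInnerProductSpace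

private lemma norm_sub_smul_le' {E : Type*} [NormedAddCommGroup E] [InnerProductSpace ℝ E]
    (a v : E) (ha : 0 < ‖a‖) (t : ℝ) (ht : 0 ≤ t) (htv : t * ‖v‖ ≤ ‖a‖ / 2) :
    ‖a - t • v‖ ≤ ‖a‖ - t * (⟪a, v⟫ / ‖a‖) + t ^ 2 * ‖v‖ ^ 2 / ‖a‖ := by
  have hexp : ‖a - t • v‖ ^ 2 = ‖a‖ ^ 2 - 2 * (t * ⟪a, v⟫) + t ^ 2 * ‖v‖ ^ 2 := by
    rw [norm_sub_sq_real, real_inner_smul_right, norm_smul, Real.norm_eq_abs, mul_pow, sq_abs]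
  have h1' := abs_le.mp (abs_real_inner_le_norm a v)
  have hb : ‖a‖ / 2 ≤ ‖a‖ - t * (⟪a, v⟫ / ‖a‖) + t ^ 2 * ‖v‖ ^ 2 / ‖a‖ := by
    have h2 : t * (⟪a, v⟫ / ‖a‖) ≤ t * ‖v‖ := by
      apply mul_le_mul_of_nonneg_left _ ht
      rw [div_le_iff₀ ha]
      nlinarith
    have h3 : (0:ℝ) ≤ t ^ 2 * ‖v‖ ^ 2 / ‖a‖ := by positivity
    linarith
  have h3 : (⟪a, v⟫ / ‖a‖) * ‖a‖ = ⟪a, v⟫ := div_mul_cancel₀ _ ha.ne'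
  have h4 : (‖v‖ ^ 2 / ‖a‖) * ‖a‖ = ‖v‖ ^ 2 := div_mul_cancel₀ _ ha.ne'
  have hsq : ‖a - t • v‖ ^ 2 ≤ (‖a‖ - t * (⟪a, v⟫ / ‖a‖) + t ^ 2 * ‖v‖ ^ 2 / ‖a‖) ^ 2 := by
    rw [hexp]
    set q : ℝ := ⟪a, v⟫ / ‖a‖ with hqdef
    set w : ℝ := ‖v‖ ^ 2 / ‖a‖ with hwdef
    have hw0 : 0 ≤ w := by positivity
    rw [show t ^ 2 * ‖v‖ ^ 2 / ‖a‖ = t ^ 2 * w by rw [hwdef]; ring, ← h3, ← h4]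
    nlinarith [mul_nonneg (mul_nonneg (sq_nonneg t) hw0) ha.le,
      mul_nonneg (sq_nonneg t) (sq_nonneg (q - t * w))]
  nlinarith [norm_nonneg (a - t • v)]

private lemma le_zero_of_forall_le_eps {x M : ℝ} (hM : 0 ≤ M)
    (h : ∀ ε : ℝ, 0 < ε → x ≤ ε * M) : x ≤ 0 := by
  by_contra hx
  push_neg at hx
  have h1 := h (x / (2 * (M + 1))) (by positivity)
  have h2 : x / (2 * (M + 1)) * M < x := by
    rw [div_mul_eq_mul_div, div_lt_iff₀ (by positivity)]
    nlinarith
  linarith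

set_option maxHeartbeats 4000000 in
/-- KKT / reflection condition for the optimal sensing node on a sensing disc: if
`A` and `C` lie strictly outside the closed disc `B(T, r)` and the segment from `A`
to `C` misses the disc, then `S ↦ ‖A - S‖ + ‖C - S‖` attains a minimum on the disc,
every minimizer lies on the boundary (`‖S* - T‖ = r`), and at every minimizer the
line through `S*` and `T` bisects the angle between the segments to `A` and `C`. -/
theorem sensing_node_reflection_condition (r : ℝ) (hr : 0 < r)
    (T A C : EuclideanSpace ℝ (Fin 2))
    (hA : r < ‖A - T‖) (hC : r < ‖C - T‖)
    (hseg : Disjoint (segment ℝ A C) (Metric.closedBall T r)) :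
    (∃ S ∈ Metric.closedBall T r,
        IsMinOn (fun S => ‖A - S‖ + ‖C - S‖) (Metric.closedBall T r) S) ∧
      ∀ S' ∈ Metric.closedBall T r,
        IsMinOn (fun S => ‖A - S‖ + ‖C - S‖) (Metric.closedBall T r) S' →
          ‖S' - T‖ = r ∧
            (inner ℝ (A - S') (T - S') : ℝ) / ‖A - S'‖ =
              (inner ℝ (C - S') (T - S') : ℝ) / ‖C - S'‖ := by
  constructor
  · obtain ⟨S, hS, hmin⟩ := (isCompact_closedBall T r).exists_isMinOn
      ⟨T, mem_closedBall_self hr.le⟩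
      (((continuous_const.sub continuous_id).norm.add
        (continuous_const.sub continuous_id).norm).continuousOn)
    exact ⟨S, hS, hmin⟩
  intro S' hS' hminOn
  have hmin : ∀ x ∈ Metric.closedBall T r,
      ‖A - S'‖ + ‖C - S'‖ ≤ ‖A - x‖ + ‖C - x‖ := fun x hx => isMinOn_iff.mp hminOn x hx
  have hSseg : S' ∉ segment ℝ A C := fun hx => Set.disjoint_left.mp hseg hx hS'
  -- strict triangle inequality at S'
  have htri : dist A C < ‖A - S'‖ + ‖C - S'‖ := by
    have hle : dist A C ≤ dist A S' + dist S' C := dist_triangle A S' C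
    rcases lt_or_eq_of_le hle with h | h
    · rwa [dist_eq_norm, dist_comm S' C, dist_eq_norm] at h
    · exact absurd (mem_segment_iff_wbtw.mpr (dist_add_dist_eq_iff.mp h.symm)) hSseg
  have hS'le : ‖S' - T‖ ≤ r := by rwa [mem_closedBall, dist_eq_norm] at hS'
  -- constraint is active
  have hbd : ‖S' - T‖ = r := by
    by_contra hne
    have hlt : ‖S' - T‖ < r := lt_of_le_of_ne hS'le hne
    set P := midpoint ℝ A C with hPdef
    have hPseg : P ∈ segment ℝ A C := midpoint_mem_segment A C
    have hfP : dist A P + dist P C = dist A C := dist_add_dist_eq_iff.mpr (mem_segment_iff_wbtw.mp hPseg)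
    have hPne : P ≠ S' := fun h => hSseg (h ▸ hPseg)
    have hd : 0 < ‖P - S'‖ := by rw [norm_pos_iff]; exact sub_ne_zero.mpr hPne
    set t : ℝ := min 1 ((r - ‖S' - T‖) / ‖P - S'‖) with htdef
    have ht0 : 0 < t := lt_min one_pos (div_pos (by linarith) hd)
    have ht1 : t ≤ 1 := min_le_left _ _
    have htd : t * ‖P - S'‖ ≤ r - ‖S' - T‖ := by
      calc t * ‖P - S'‖ ≤ ((r - ‖S' - T‖) / ‖P - S'‖) * ‖P - S'‖ :=
            mul_le_mul_of_nonneg_right (min_le_right _ _) hd.le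
        _ = r - ‖S' - T‖ := div_mul_cancel₀ _ hd.ne'
    set Q := S' + t • (P - S') with hQdef
    have hQmem : Q ∈ Metric.closedBall T r := by
      rw [mem_closedBall, dist_eq_norm]
      have hQT : Q - T = (S' - T) + t • (P - S') := by rw [hQdef]; abel
      rw [hQT]
      calc ‖(S' - T) + t • (P - S')‖ ≤ ‖S' - T‖ + ‖t • (P - S')‖ := norm_add_le _ _
        _ = ‖S' - T‖ + t * ‖P - S'‖ := by
            rw [norm_smul, Real.norm_eq_abs, abs_of_pos ht0]
        _ ≤ r := by linarith
    have hAQ : ‖A - Q‖ ≤ (1 - t) * ‖A - S'‖ + t * ‖A - P‖ := by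
      have h1 : A - Q = (1 - t) • (A - S') + t • (A - P) := by
        rw [hQdef]; module
      rw [h1]
      calc ‖(1 - t) • (A - S') + t • (A - P)‖
          ≤ ‖(1 - t) • (A - S')‖ + ‖t • (A - P)‖ := norm_add_le _ _
        _ = (1 - t) * ‖A - S'‖ + t * ‖A - P‖ := by
            rw [norm_smul, norm_smul, Real.norm_eq_abs, Real.norm_eq_abs,
              abs_of_nonneg (by linarith), abs_of_pos ht0]
    have hCQ : ‖C - Q‖ ≤ (1 - t) * ‖C - S'‖ + t * ‖C - P‖ := by
      have h1 : C - Q = (1 - t) • (C - S') + t • (C - P) := by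
        rw [hQdef]; module
      rw [h1]
      calc ‖(1 - t) • (C - S') + t • (C - P)‖
          ≤ ‖(1 - t) • (C - S')‖ + ‖t • (C - P)‖ := norm_add_le _ _
        _ = (1 - t) * ‖C - S'‖ + t * ‖C - P‖ := by
            rw [norm_smul, norm_smul, Real.norm_eq_abs, Real.norm_eq_abs,
              abs_of_nonneg (by linarith), abs_of_pos ht0]
    have hfPnorm : ‖A - P‖ + ‖C - P‖ = dist A C := by
      rw [dist_eq_norm A P, dist_comm P C, dist_eq_norm C P] at hfP
      exact hfP
    have hQmin := hmin Q hQmem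
    nlinarith [mul_pos ht0 (sub_pos.mpr htri)]
  refine ⟨hbd, ?_⟩
  -- notation
  set a := A - S' with hadef
  set c := C - S' with hcdef
  set n := T - S' with hndef
  have hnr : ‖n‖ = r := by
    rw [← hbd, hndef, ← norm_neg]
    congr 1
    abel
  have hn2 : ⟪n, n⟫ = r ^ 2 := by rw [real_inner_self_eq_norm_sq, hnr]
  have ha0 : 0 < ‖a‖ := by
    have h := norm_sub_norm_le (A - T) (S' - T)
    have he : A - T - (S' - T) = a := by rw [hadef]; abel
    rw [he] at h
    linarith
  have hc0 : 0 < ‖c‖ := by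
    have h := norm_sub_norm_le (C - T) (S' - T)
    have he : C - T - (S' - T) = c := by rw [hcdef]; abel
    rw [he] at h
    linarith
  clear_value a c n
  -- the KKT directional inequality
  have hdir : ∀ v : EuclideanSpace ℝ (Fin 2), 0 < ⟪v, n⟫ →
      ⟪a, v⟫ / ‖a‖ + ⟪c, v⟫ / ‖c‖ ≤ 0 := by
    intro v hv
    by_contra hpos
    push_neg at hpos
    have hv0 : 0 < ‖v‖ := by
      rcases eq_or_ne v 0 with h | h
      · rw [h, inner_zero_left] at hv; exact absurd hv (lt_irrefl 0)
      · exact norm_pos_iff.mpr h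
    set u : ℝ := ⟪a, v⟫ / ‖a‖ + ⟪c, v⟫ / ‖c‖ with hudef
    set K : ℝ := ‖v‖ ^ 2 / ‖a‖ + ‖v‖ ^ 2 / ‖c‖ with hKdef
    have hK0 : 0 ≤ K := by positivity
    set t : ℝ := min (min (‖a‖ / (2 * ‖v‖)) (‖c‖ / (2 * ‖v‖)))
        (min (⟪v, n⟫ / ‖v‖ ^ 2) (u / (K + 1))) with htdef
    have ht0 : 0 < t := lt_min (lt_min (by positivity) (by positivity))
      (lt_min (by positivity) (by positivity))
    have hta : t * ‖v‖ ≤ ‖a‖ / 2 := by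
      calc t * ‖v‖ ≤ (‖a‖ / (2 * ‖v‖)) * ‖v‖ :=
            mul_le_mul_of_nonneg_right ((min_le_left _ _).trans (min_le_left _ _)) hv0.le
        _ = ‖a‖ / 2 := by field_simp
    have htc : t * ‖v‖ ≤ ‖c‖ / 2 := by
      calc t * ‖v‖ ≤ (‖c‖ / (2 * ‖v‖)) * ‖v‖ :=
            mul_le_mul_of_nonneg_right ((min_le_left _ _).trans (min_le_right _ _)) hv0.le
        _ = ‖c‖ / 2 := by field_simp
    have htn : t * ‖v‖ ^ 2 ≤ ⟪v, n⟫ := by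
      calc t * ‖v‖ ^ 2 ≤ (⟪v, n⟫ / ‖v‖ ^ 2) * ‖v‖ ^ 2 :=
            mul_le_mul_of_nonneg_right ((min_le_right _ _).trans (min_le_left _ _))
              (by positivity)
        _ = ⟪v, n⟫ := div_mul_cancel₀ _ (by positivity)
    have htu : t * (K + 1) ≤ u := by
      calc t * (K + 1) ≤ (u / (K + 1)) * (K + 1) :=
            mul_le_mul_of_nonneg_right ((min_le_right _ _).trans (min_le_right _ _))
              (by positivity)
        _ = u := div_mul_cancel₀ _ (by positivity)
    clear_value t u K
    have hmem : S' + t • v ∈ Metric.closedBall T r := by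
      rw [mem_closedBall, dist_eq_norm]
      have h1 : S' + t • v - T = t • v - n := by rw [hndef]; abel
      have hsq : ‖S' + t • v - T‖ ^ 2 ≤ r ^ 2 := by
        rw [h1, norm_sub_sq_real, real_inner_smul_left, norm_smul, Real.norm_eq_abs,
          mul_pow, sq_abs, hnr]
        nlinarith [mul_le_mul_of_nonneg_left htn ht0.le, mul_pos ht0 hv]
      nlinarith [norm_nonneg (S' + t • v - T)]
    have hAle := norm_sub_smul_le' a v ha0 t ht0.le hta
    have hCle := norm_sub_smul_le' c v hc0 t ht0.le htc
    have hAv : A - (S' + t • v) = a - t • v := by rw [hadef]; abel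
    have hCv : C - (S' + t • v) = c - t • v := by rw [hcdef]; abel
    have hmm : ‖a‖ + ‖c‖ ≤ ‖A - (S' + t • v)‖ + ‖C - (S' + t • v)‖ :=
      hmin _ hmem
    rw [hAv, hCv] at hmm
    have hKeq : t ^ 2 * ‖v‖ ^ 2 / ‖a‖ + t ^ 2 * ‖v‖ ^ 2 / ‖c‖ = t ^ 2 * K := by
      rw [hKdef]; ring
    have hueq : t * (⟪a, v⟫ / ‖a‖) + t * (⟪c, v⟫ / ‖c‖) = t * u := by
      rw [hudef]; ring
    nlinarith [mul_le_mul_of_nonneg_left htu ht0.le, mul_pos ht0 ht0]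
  -- the gradient is parallel to n : first, orthogonal components vanish
  have hUv : ∀ v : EuclideanSpace ℝ (Fin 2),
      ⟪‖a‖⁻¹ • a + ‖c‖⁻¹ • c, v⟫ = ⟪a, v⟫ / ‖a‖ + ⟪c, v⟫ / ‖c‖ := by
    intro v
    rw [inner_add_left, real_inner_smul_left, real_inner_smul_left]
    rw [div_eq_inv_mul, div_eq_inv_mul]
  set U : EuclideanSpace ℝ (Fin 2) := ‖a‖⁻¹ • a + ‖c‖⁻¹ • c with hUdef
  have hdirU : ∀ v : EuclideanSpace ℝ (Fin 2), 0 < ⟪v, n⟫ → ⟪U, v⟫ ≤ 0 := by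
    intro v hv
    rw [hUv v]
    exact hdir v hv
  have hUn : ⟪U, n⟫ ≤ 0 := hdirU n (by rw [hn2]; positivity)
  have hortho : ∀ w : EuclideanSpace ℝ (Fin 2), ⟪w, n⟫ = 0 → ⟪U, w⟫ = 0 := by
    intro w hw
    have haux : ∀ w' : EuclideanSpace ℝ (Fin 2), ⟪w', n⟫ = 0 → ⟪U, w'⟫ ≤ 0 := by
      intro w' hw'
      refine le_zero_of_forall_le_eps (M := -⟪U, n⟫) (by linarith) ?_
      intro ε hε
      have h1 : (0:ℝ) < ⟪w' + ε • n, n⟫ := by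
        rw [inner_add_left, real_inner_smul_left, hw', hn2]
        positivity
      have h2 := hdirU (w' + ε • n) h1
      rw [inner_add_right, real_inner_smul_right] at h2
      linarith
    have h1 := haux w hw
    have h2 := haux (-w) (by rw [inner_neg_left, hw, neg_zero])
    rw [inner_neg_right] at h2
    linarith
  set s : ℝ := ⟪U, n⟫ / r ^ 2 with hsdef
  have hU : U = s • n := by
    have hwn : ⟪U - s • n, n⟫ = 0 := by
      rw [inner_sub_left, real_inner_smul_left, hn2, hsdef,
        div_mul_cancel₀ _ (by positivity : (r:ℝ) ^ 2 ≠ 0), sub_self]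
    have hUw : ⟪U, U - s • n⟫ = 0 := hortho _ hwn
    have hz : ⟪U - s • n, U - s • n⟫ = (0:ℝ) := by
      rw [inner_sub_left, hUw, real_inner_smul_left, real_inner_comm (U - s • n) n, hwn,
        mul_zero, sub_zero]
    have := inner_self_eq_zero.mp hz
    rwa [sub_eq_zero] at this
  have hs0 : s ≤ 0 := div_nonpos_of_nonpos_of_nonneg hUn (by positivity)
  clear_value U s
  rcases eq_or_lt_of_le hs0 with hseq | hslt
  · -- s = 0 impossible: S' would lie on the segment
    exfalso
    have hU0 : ‖a‖⁻¹ • a + ‖c‖⁻¹ • c = 0 := by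
      rw [← hUdef, hU, hseq, zero_smul]
    have h1 : ‖a‖⁻¹ • a = -(‖c‖⁻¹ • c) := add_eq_zero_iff_eq_neg.mp hU0
    have h2 : a = -((‖a‖ / ‖c‖) • c) := by
      have h3 := congrArg (fun x : EuclideanSpace ℝ (Fin 2) => ‖a‖ • x) h1
      simp only [smul_smul, smul_neg] at h3
      rw [mul_inv_cancel₀ ha0.ne', one_smul] at h3
      rw [div_eq_mul_inv]
      exact h3
    have hAC : A - C = -(((‖a‖ / ‖c‖) + 1) • c) := by
      have h4 : A - C = a - c := by rw [hadef, hcdef]; abel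
      rw [h4]
      nth_rewrite 1 [h2]
      module
    have hACnorm : ‖A - C‖ = ‖a‖ + ‖c‖ := by
      rw [hAC, norm_neg, norm_smul, Real.norm_eq_abs,
        abs_of_pos (by positivity : (0:ℝ) < ‖a‖ / ‖c‖ + 1), add_mul, one_mul,
        div_mul_cancel₀ _ hc0.ne']
    have hdisteq : dist A S' + dist S' C = dist A C := by
      rw [dist_eq_norm, dist_eq_norm, dist_eq_norm, norm_sub_rev S' C, ← hadef, ← hcdef,
        hACnorm]
    exact hSseg (mem_segment_iff_wbtw.mpr (dist_add_dist_eq_iff.mp hdisteq))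
  · -- s < 0 : reflection condition
    have hUa : ⟪U, a⟫ = s * ⟪n, a⟫ := by rw [hU, real_inner_smul_left]
    have hUc : ⟪U, c⟫ = s * ⟪n, c⟫ := by rw [hU, real_inner_smul_left]
    have ha' : ‖a‖ ≠ 0 := ha0.ne'
    have hc' : ‖c‖ ≠ 0 := hc0.ne'
    have hsym : ⟪U, a⟫ / ‖a‖ = ⟪U, c⟫ / ‖c‖ := by
      rw [hUv a, hUv c, real_inner_self_eq_norm_sq, real_inner_self_eq_norm_sq,
        real_inner_comm c a]
      field_simp
      ring
    rw [hUa, hUc] at hsym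
    have hfin : ⟪n, a⟫ / ‖a‖ = ⟪n, c⟫ / ‖c‖ := by
      refine mul_left_cancel₀ (ne_of_lt hslt) ?_
      rw [← mul_div_assoc, ← mul_div_assoc]
      exact hsym
    rw [real_inner_comm n a, real_inner_comm n c]
    exact hfin
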